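/- Let k ≥ 1, n ≥ 1, q ∈ ℚ, and let α = (α₁,…,α_k) ∈ ℕ^k satisfy Σ_{j=1}^k j·α_j = n (so |α| = α₁+⋯+α_k ≥ 1). Then B_{|α|−1}(q)/(α₁!⋯α_k!) = Σ_{i=1}^{k}, over those i with α_i ≥ 1, of (1/n)·(i·q + n − i)·B_{|α|−2}(q)/(α₁!⋯(α_i − 1)!⋯α_k!). -/

import Mathlib

open Finset

/-- The Stirling operator of the first kind: `B q m = q(q+1)⋯(q+m-1)`, i.e.
`B q m = B_{m-1}(q)` in the paper's notation, with `B q 0 = B_{-1}(q) = 1`. -/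
def B (q : ℚ) (m : ℕ) : ℚ := ∏ i ∈ Finset.range m, (q + i)

theorem stirling_coeff_recursion (k n : ℕ) (hk : 1 ≤ k) (hn : 1 ≤ n) (q : ℚ)
    (α : Fin k → ℕ) (hα : ∑ j : Fin k, (j.1 + 1) * α j = n) :
    B q (∑ j, α j) / ∏ j, ((α j).factorial : ℚ) =
      ∑ i ∈ Finset.univ.filter (fun i : Fin k => 1 ≤ α i),
        ((((i.1 + 1 : ℕ) : ℚ) * q + (n : ℚ) - ((i.1 + 1 : ℕ) : ℚ)) / (n : ℚ)) *
          (B q ((∑ j, α j) - 1) /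
            ∏ j, (((α j - if j = i then 1 else 0).factorial : ℚ))) := by
  set s := ∑ j, α j with hsdef
  have hn0 : (n : ℚ) ≠ 0 := Nat.cast_ne_zero.mpr (by omega)
  have hs1 : 1 ≤ s := by
    by_contra h
    push_neg at h
    have hs0 : s = 0 := by omega
    have hall : ∀ j : Fin k, α j = 0 := by
      intro j
      exact Finset.sum_eq_zero_iff.mp (hsdef.symm.trans hs0) j (mem_univ j)
    have : (∑ j : Fin k, (j.1 + 1) * α j) = 0 := by
      apply Finset.sum_eq_zero; intro j _; rw [hall j]; ring
    omega
  set P : ℚ := ∏ j, ((α j).factorial : ℚ) with hPdef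
  have hP0 : P ≠ 0 := by
    apply Finset.prod_ne_zero_iff.mpr
    intro j _
    exact Nat.cast_ne_zero.mpr (Nat.factorial_ne_zero _)
  have hB : B q s = B q (s - 1) * (q + (s : ℚ) - 1) := by
    conv_lhs => rw [show s = (s - 1) + 1 from (Nat.succ_pred_eq_of_pos hs1).symm]
    rw [B, Finset.prod_range_succ]
    show B q (s-1) * _ = _
    congr 1
    have : ((s - 1 : ℕ) : ℚ) = (s : ℚ) - 1 := by
      push_cast [Nat.cast_sub hs1]; ring
    rw [this]; ring
  -- product lemma
  have hprod : ∀ i : Fin k, 1 ≤ α i →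
      (∏ j, (((α j - if j = i then 1 else 0).factorial : ℚ))) * (α i : ℚ) = P := by
    intro i hi
    rw [hPdef, ← Finset.prod_erase_mul univ _ (mem_univ i),
        ← Finset.prod_erase_mul univ (fun j => ((α j).factorial : ℚ)) (mem_univ i)]
    have h1 : ∀ j ∈ univ.erase i,
        ((α j - if j = i then 1 else 0).factorial : ℚ) = ((α j).factorial : ℚ) := by
      intro j hj
      rw [if_neg (Finset.ne_of_mem_erase hj)]
      simp
    rw [Finset.prod_congr rfl h1, mul_assoc]
    congr 1
    rw [if_pos rfl]
    have : (α i).factorial = (α i - 1).factorial * α i := by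
      obtain ⟨m, hm⟩ := Nat.exists_eq_succ_of_ne_zero (by omega : α i ≠ 0)
      rw [hm]
      simp [Nat.factorial_succ]
      ring
    rw [this]
    push_cast
    ring
  -- main sum computation
  have hsum : ∑ i : Fin k, (α i : ℚ) * (((i.1 + 1 : ℕ) : ℚ) * q + (n : ℚ) - ((i.1 + 1 : ℕ) : ℚ))
      = (n : ℚ) * (q + (s : ℚ) - 1) := by
    have h1 : (∑ i : Fin k, (((i.1 + 1 : ℕ) : ℚ)) * (α i : ℚ)) = (n : ℚ) := by
      exact_mod_cast congrArg (Nat.cast : ℕ → ℚ) hα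
    have h2 : (∑ i : Fin k, (α i : ℚ)) = (s : ℚ) := by
      exact_mod_cast congrArg (Nat.cast : ℕ → ℚ) hsdef.symm
    calc ∑ i : Fin k, (α i : ℚ) * (((i.1 + 1 : ℕ) : ℚ) * q + (n : ℚ) - ((i.1 + 1 : ℕ) : ℚ))
        = ∑ i : Fin k, ((((i.1 + 1 : ℕ) : ℚ)) * (α i : ℚ) * q
            + (α i : ℚ) * (n : ℚ) - (((i.1 + 1 : ℕ) : ℚ)) * (α i : ℚ)) := by
          apply Finset.sum_congr rfl; intro i _; ring
      _ = (∑ i : Fin k, (((i.1 + 1 : ℕ) : ℚ)) * (α i : ℚ)) * q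
            + (∑ i : Fin k, (α i : ℚ)) * (n : ℚ)
            - ∑ i : Fin k, (((i.1 + 1 : ℕ) : ℚ)) * (α i : ℚ) := by
          rw [Finset.sum_sub_distrib, Finset.sum_add_distrib, ← Finset.sum_mul,
            ← Finset.sum_mul]
      _ = (n : ℚ) * (q + (s : ℚ) - 1) := by rw [h1, h2]; ring
  -- rewrite each term of the RHS
  have hterm : ∀ i ∈ Finset.univ.filter (fun i : Fin k => 1 ≤ α i),
      ((((i.1 + 1 : ℕ) : ℚ) * q + (n : ℚ) - ((i.1 + 1 : ℕ) : ℚ)) / (n : ℚ)) *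
          (B q (s - 1) / ∏ j, (((α j - if j = i then 1 else 0).factorial : ℚ))) =
      (B q (s - 1) / ((n : ℚ) * P)) *
        ((α i : ℚ) * (((i.1 + 1 : ℕ) : ℚ) * q + (n : ℚ) - ((i.1 + 1 : ℕ) : ℚ))) := by
    intro i hi
    rw [Finset.mem_filter] at hi
    have hQ := hprod i hi.2
    have hαi : (α i : ℚ) ≠ 0 := Nat.cast_ne_zero.mpr (by omega)
    have hQ0 : (∏ j, (((α j - if j = i then 1 else 0).factorial : ℚ))) ≠ 0 := by
      apply Finset.prod_ne_zero_iff.mpr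
      intro j _
      exact Nat.cast_ne_zero.mpr (Nat.factorial_ne_zero _)
    field_simp
    rw [← hQ]
    ring
  rw [Finset.sum_congr rfl hterm, ← Finset.mul_sum]
  have hext : ∑ i ∈ Finset.univ.filter (fun i : Fin k => 1 ≤ α i),
      ((α i : ℚ) * (((i.1 + 1 : ℕ) : ℚ) * q + (n : ℚ) - ((i.1 + 1 : ℕ) : ℚ)))
      = ∑ i : Fin k, ((α i : ℚ) * (((i.1 + 1 : ℕ) : ℚ) * q + (n : ℚ) - ((i.1 + 1 : ℕ) : ℚ))) := by
    apply Finset.sum_subset (Finset.filter_subset _ _)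
    intro i _ hi
    rw [Finset.mem_filter] at hi
    have : α i = 0 := by
      by_contra h
      exact hi ⟨mem_univ i, by omega⟩
    rw [this]
    push_cast
    ring
  rw [hext, hsum, hB]
  field_simp
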